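/- Duality criterion for integral solvability: for a rational m × n matrix M and rational vector c of length m, the system Mx = c has an integral solution x ∈ ℤⁿ if and only if for every rational row vector y of length m, yᵀc ∈ ℤ whenever yᵀM has all integer entries. -/

import Mathlib

open Finset Matrix

private lemma key_mem (m : ℕ) (L : Submodule ℤ (Fin m → ℚ)) (hFG : L.FG) (c : Fin m → ℚ)
    (H : ∀ f : (Fin m → ℚ) →ₗ[ℚ] ℚ, (∀ w ∈ L, ∃ z : ℤ, f w = z) → ∃ z : ℤ, f c = z) :
    c ∈ L := by
  classical
  haveI : Module.Finite ℤ L := Module.Finite.iff_fg.mpr hFG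
  let b : Module.Basis (Module.Free.ChooseBasisIndex ℤ L) ℤ L := Module.Free.chooseBasis ℤ L
  let v : Module.Free.ChooseBasisIndex ℤ L → (Fin m → ℚ) := fun i => (b i : Fin m → ℚ)
  have hvL : Submodule.span ℤ (Set.range v) = L := by
    have h1 : Submodule.map L.subtype (Submodule.span ℤ (Set.range b)) = L := by
      rw [b.span_eq, Submodule.map_top, Submodule.range_subtype]
    rw [Submodule.map_span, ← Set.range_comp] at h1
    exact h1
  have hvZ : LinearIndependent ℤ v :=
    b.linearIndependent.map' L.subtype (Submodule.ker_subtype L)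
  have hvQ : LinearIndependent ℚ v := (LinearIndependent.iff_fractionRing ℤ ℚ).mp hvZ
  have hs := (linearIndepOn_id_range_iff hvQ.injective).mpr hvQ
  let B := Module.Basis.extend hs
  have hsub : Set.range v ⊆ hs.extend (Set.subset_univ _) := Module.Basis.subset_extend hs
  -- coordinates of elements of `L` are integers
  have claim1 : ∀ w ∈ L, ∀ k, ∃ z : ℤ, B.coord k w = z := by
    intro w hw k
    rw [← hvL] at hw
    induction hw using Submodule.span_induction with
    | mem x hx =>
        obtain ⟨i, rfl⟩ := hx
        have hvi : v i ∈ hs.extend (Set.subset_univ _) := hsub (Set.mem_range_self i)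
        have hB : B ⟨v i, hvi⟩ = v i := Module.Basis.extend_apply_self hs _
        rw [← hB, Module.Basis.coord_apply, Module.Basis.repr_self]
        by_cases hk : k = ⟨v i, hvi⟩
        · exact ⟨1, by simp [hk]⟩
        · exact ⟨0, by simp [Finsupp.single_apply, (Ne.symm hk)]⟩
    | zero => exact ⟨0, by simp⟩
    | add x y hx hy ihx ihy =>
        obtain ⟨z1, hz1⟩ := ihx; obtain ⟨z2, hz2⟩ := ihy
        exact ⟨z1 + z2, by rw [map_add, hz1, hz2]; push_cast; ring⟩
    | smul a x hx ihx =>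
        obtain ⟨z, hz⟩ := ihx
        refine ⟨a * z, ?_⟩
        rw [← Int.cast_smul_eq_zsmul ℚ a x, _root_.map_smul, smul_eq_mul, hz]
        push_cast; ring
  -- coordinates outside `range v` vanish on `L`, hence on `c`
  have claim2 : ∀ k : hs.extend (Set.subset_univ (Set.range v)),
      (k : Fin m → ℚ) ∉ Set.range v → B.coord k c = 0 := by
    intro k hk
    have hvan : ∀ w ∈ L, B.coord k w = 0 := by
      intro w hw
      rw [← hvL] at hw
      induction hw using Submodule.span_induction with
      | mem x hx =>
          obtain ⟨i, rfl⟩ := hx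
          have hvi : v i ∈ hs.extend (Set.subset_univ _) := hsub (Set.mem_range_self i)
          have hB : B ⟨v i, hvi⟩ = v i := Module.Basis.extend_apply_self hs _
          have hne : (⟨v i, hvi⟩ : hs.extend (Set.subset_univ _)) ≠ k := by
            intro h; exact hk (h ▸ Set.mem_range_self i)
          rw [← hB, Module.Basis.coord_apply, Module.Basis.repr_self, Finsupp.single_apply, if_neg hne]
      | zero => simp
      | add x y hx hy ihx ihy => rw [map_add, ihx, ihy, add_zero]
      | smul a x hx ihx =>
          rw [← Int.cast_smul_eq_zsmul ℚ a x, _root_.map_smul, smul_eq_mul, ihx, mul_zero]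
    by_contra hne
    obtain ⟨z, hz⟩ := H ((2 * B.coord k c)⁻¹ • (B.coord k : (Fin m → ℚ) →ₗ[ℚ] ℚ))
      (by
        intro w hw
        exact ⟨0, by simp [hvan w hw]⟩)
    rw [LinearMap.smul_apply, smul_eq_mul] at hz
    have h2 : (2 * z : ℤ) = 1 := by
      have h3 : (2 * (z:ℚ)) = 1 := by
        rw [← hz]; field_simp
      exact_mod_cast h3
    omega
  have claim3 : ∀ k, ∃ z : ℤ, B.repr c k = z := by
    intro k
    obtain ⟨z, hz⟩ := H (B.coord k) (fun w hw => claim1 w hw k)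
    exact ⟨z, by rwa [Module.Basis.coord_apply] at hz⟩
  -- conclude
  have hc : ((B.repr c).sum fun k q => q • B k) = c := by
    conv_rhs => rw [← B.linearCombination_repr c]
    rw [Finsupp.linearCombination_apply]
  rw [← hc]
  refine Submodule.sum_mem L ?_
  intro k _
  dsimp only
  by_cases hk : (k : Fin m → ℚ) ∈ Set.range v
  · obtain ⟨z, hz⟩ := claim3 k
    rw [hz, Int.cast_smul_eq_zsmul]
    refine Submodule.smul_mem L z ?_
    have hB : B k = (k : Fin m → ℚ) := Module.Basis.extend_apply_self hs k
    have hkL : (k : Fin m → ℚ) ∈ L := hvL.le (Submodule.subset_span hk)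
    rw [hB]; exact hkL
  · have : B.repr c k = 0 := by rw [← Module.Basis.coord_apply]; exact claim2 k hk
    rw [this, zero_smul]
    exact Submodule.zero_mem L

/-- Integer Farkas-type duality (Schrijver): a rational linear system `M x = c`
has an integral solution iff `yᵀc` is an integer whenever `yᵀM` is integral. -/
theorem stmt18 (m n : ℕ) (M : Matrix (Fin m) (Fin n) ℚ) (c : Fin m → ℚ) :
    (∃ x : Fin n → ℤ, M.mulVec (fun j => (x j : ℚ)) = c) ↔
      ∀ y : Fin m → ℚ, (∀ j, ∃ z : ℤ, Matrix.vecMul y M j = z) →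
        ∃ z : ℤ, y ⬝ᵥ c = z := by
  classical
  constructor
  · rintro ⟨x, hx⟩ y hy
    choose z hz using hy
    refine ⟨∑ j, z j * x j, ?_⟩
    rw [← hx, Matrix.dotProduct_mulVec]
    have : Matrix.vecMul y M = fun j => (z j : ℚ) := funext hz
    rw [this]
    simp only [dotProduct]
    push_cast
    try ring
  · intro H
    set col : Fin n → (Fin m → ℚ) := fun j i => M i j with hcoldef
    have hcolL : ∀ j, col j ∈ Submodule.span ℤ (Set.range col) :=
      fun j => Submodule.subset_span (Set.mem_range_self j)
    have hmem : c ∈ Submodule.span ℤ (Set.range col) := by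
      refine key_mem m _ (Submodule.fg_span (Set.finite_range col)) c ?_
      intro f hf
      set y : Fin m → ℚ := fun i => f (Pi.single i 1) with hydef
      have hyd : ∀ w : Fin m → ℚ, y ⬝ᵥ w = f w := by
        intro w
        conv_rhs => rw [pi_eq_sum_univ w]
        rw [map_sum]
        simp only [_root_.map_smul, smul_eq_mul, dotProduct]
        refine Finset.sum_congr rfl fun i _ => ?_
        have hsing : (fun j => if i = j then (1:ℚ) else 0) = Pi.single i 1 := by
          funext j; simp [Pi.single_apply, eq_comm]
        rw [hsing, hydef, mul_comm]
      have hyM : ∀ j, ∃ zz : ℤ, Matrix.vecMul y M j = zz := by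
        intro j
        obtain ⟨zz, hzz⟩ := hf (col j) (hcolL j)
        refine ⟨zz, ?_⟩
        have : Matrix.vecMul y M j = y ⬝ᵥ col j := by
          simp [Matrix.vecMul, dotProduct, hcoldef]
        rw [this, hyd, hzz]
      obtain ⟨zz, hzz⟩ := H y hyM
      exact ⟨zz, by rw [← hyd c]; exact hzz⟩
    rw [Submodule.mem_span_range_iff_exists_fun] at hmem
    obtain ⟨x, hx⟩ := hmem
    refine ⟨x, ?_⟩
    rw [← hx]
    funext i
    simp only [Matrix.mulVec, dotProduct, Finset.sum_apply, Pi.smul_apply, hcoldef,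
      zsmul_eq_mul]
    exact Finset.sum_congr rfl fun j _ => mul_comm _ _
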